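/- There exists a group homomorphism ρ : B₃ → GL₆(ℂ) such that Tr(ρ(σ₁⁻²σ₂σ₁⁻¹σ₂σ₁⁻¹σ₂²)) ≠ Tr(ρ(σ₂²σ₁⁻¹σ₂σ₁⁻¹σ₂σ₁⁻²)); consequently the braid b = σ₁⁻²σ₂σ₁⁻¹σ₂σ₁⁻¹σ₂² is not conjugate in B₃ to its reversed braid b' = σ₂²σ₁⁻¹σ₂σ₁⁻¹σ₂σ₁⁻². -/

import Mathlib

open Matrix

/-- The explicit 6×6 matrix σ₁ from the paper, over ℂ with ρ a
primitive third root of unity. -/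
noncomputable def sigma1 (ρ : ℂ) : Matrix (Fin 6) (Fin 6) ℂ :=
  !![ρ+1, ρ-1, ρ-1, ρ-1, -ρ+1, -ρ+1;
     -2*ρ-1, -1, -2*ρ-1, 2*ρ+1, -2*ρ-1, 2*ρ+1;
     ρ+2, ρ+2, -ρ, ρ-2, -ρ-2, ρ+2;
     -ρ-2, -3*ρ, ρ+2, -ρ+2, 3*ρ, -ρ-2;
     ρ-1, -ρ+1, 3*ρ+3, -ρ+1, 3*ρ+1, -3*ρ-3;
     -3, -2*ρ-1, 2*ρ+1, 3, 2*ρ+1, -2*ρ-3]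

/-- The explicit 6×6 matrix σ₂ from the paper. -/
noncomputable def sigma2 (ρ : ℂ) : Matrix (Fin 6) (Fin 6) ℂ :=
  !![ρ+1, ρ-1, ρ-1, -ρ+1, ρ-1, ρ-1;
     -2*ρ-1, -1, -2*ρ-1, -2*ρ-1, 2*ρ+1, -2*ρ-1;
     ρ+2, ρ+2, -ρ, ρ+2, ρ+2, -ρ-2;
     ρ+2, 3*ρ, -ρ-2, ρ+2, 3*ρ, -ρ-2;
     -ρ+1, ρ-1, -3*ρ-3, -ρ+1, 3*ρ+1, -3*ρ-3;
     3, 2*ρ+1, -2*ρ-1, 3, 2*ρ+1, -2*ρ-3]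

def braidRels : Set (FreeGroup (Fin 2)) :=
  {FreeGroup.of 0 * FreeGroup.of 1 * FreeGroup.of 0 *
    (FreeGroup.of 1 * FreeGroup.of 0 * FreeGroup.of 1)⁻¹}

abbrev B3 := PresentedGroup braidRels

def σ (i : Fin 2) : B3 := PresentedGroup.of i


set_option linter.unreachableTactic false
set_option linter.unusedTactic false

noncomputable def mA : Matrix (Fin 6) (Fin 6) ℂ := Matrix.of fun i j =>
  if i = 0 ∧ j = 5 then (2/3) else if i = 1 ∧ j = 0 then 2 else if i = 2 ∧ j = 1 then 3 else if i = 3 ∧ j = 2 then (3/2) else if i = 4 ∧ j = 3 then (1/2) else if i = 5 ∧ j = 4 then (1/3) else 0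

noncomputable def mAi : Matrix (Fin 6) (Fin 6) ℂ := Matrix.of fun i j =>
  if i = 0 ∧ j = 1 then (1/2) else if i = 1 ∧ j = 2 then (1/3) else if i = 2 ∧ j = 3 then (2/3) else if i = 3 ∧ j = 4 then 2 else if i = 4 ∧ j = 5 then 3 else if i = 5 ∧ j = 0 then (3/2) else 0

noncomputable def mB : Matrix (Fin 6) (Fin 6) ℂ := Matrix.of fun i j =>
  if i = 0 ∧ j = 5 then 1 else if i = 1 ∧ j = 0 then 1 else if i = 2 ∧ j = 1 then 1 else if i = 3 ∧ j = 2 then 1 else if i = 4 ∧ j = 3 then 1 else if i = 5 ∧ j = 4 then 1 else 0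

noncomputable def mBi : Matrix (Fin 6) (Fin 6) ℂ := Matrix.of fun i j =>
  if i = 0 ∧ j = 1 then 1 else if i = 1 ∧ j = 2 then 1 else if i = 2 ∧ j = 3 then 1 else if i = 3 ∧ j = 4 then 1 else if i = 4 ∧ j = 5 then 1 else if i = 5 ∧ j = 0 then 1 else 0

noncomputable def mAB : Matrix (Fin 6) (Fin 6) ℂ := Matrix.of fun i j =>
  if i = 0 ∧ j = 4 then (2/3) else if i = 1 ∧ j = 5 then 2 else if i = 2 ∧ j = 0 then 3 else if i = 3 ∧ j = 1 then (3/2) else if i = 4 ∧ j = 2 then (1/2) else if i = 5 ∧ j = 3 then (1/3) else 0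

noncomputable def mBA : Matrix (Fin 6) (Fin 6) ℂ := Matrix.of fun i j =>
  if i = 0 ∧ j = 4 then (1/3) else if i = 1 ∧ j = 5 then (2/3) else if i = 2 ∧ j = 0 then 2 else if i = 3 ∧ j = 1 then 3 else if i = 4 ∧ j = 2 then (3/2) else if i = 5 ∧ j = 3 then (1/2) else 0

noncomputable def mABA : Matrix (Fin 6) (Fin 6) ℂ := Matrix.of fun i j =>
  if i = 0 ∧ j = 3 then (1/3) else if i = 1 ∧ j = 4 then (2/3) else if i = 2 ∧ j = 5 then 2 else if i = 3 ∧ j = 0 then 3 else if i = 4 ∧ j = 1 then (3/2) else if i = 5 ∧ j = 2 then (1/2) else 0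

noncomputable def mP1 : Matrix (Fin 6) (Fin 6) ℂ := Matrix.of fun i j =>
  if i = 0 ∧ j = 2 then (1/6) else if i = 1 ∧ j = 3 then (2/9) else if i = 2 ∧ j = 4 then (4/3) else if i = 3 ∧ j = 5 then 6 else if i = 4 ∧ j = 0 then (9/2) else if i = 5 ∧ j = 1 then (3/4) else 0

noncomputable def mP2 : Matrix (Fin 6) (Fin 6) ℂ := Matrix.of fun i j =>
  if i = 0 ∧ j = 1 then (1/6) else if i = 1 ∧ j = 2 then (2/9) else if i = 2 ∧ j = 3 then (4/3) else if i = 3 ∧ j = 4 then 6 else if i = 4 ∧ j = 5 then (9/2) else if i = 5 ∧ j = 0 then (3/4) else 0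

noncomputable def mP3 : Matrix (Fin 6) (Fin 6) ℂ := Matrix.of fun i j =>
  if i = 0 ∧ j = 2 then (1/18) else if i = 1 ∧ j = 3 then (4/27) else if i = 2 ∧ j = 4 then (8/3) else if i = 3 ∧ j = 5 then 18 else if i = 4 ∧ j = 0 then (27/4) else if i = 5 ∧ j = 1 then (3/8) else 0

noncomputable def mP4 : Matrix (Fin 6) (Fin 6) ℂ := Matrix.of fun i j =>
  if i = 0 ∧ j = 1 then (1/18) else if i = 1 ∧ j = 2 then (4/27) else if i = 2 ∧ j = 3 then (8/3) else if i = 3 ∧ j = 4 then 18 else if i = 4 ∧ j = 5 then (27/4) else if i = 5 ∧ j = 0 then (3/8) else 0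

noncomputable def mP5 : Matrix (Fin 6) (Fin 6) ℂ := Matrix.of fun i j =>
  if i = 0 ∧ j = 2 then (1/54) else if i = 1 ∧ j = 3 then (8/81) else if i = 2 ∧ j = 4 then (16/3) else if i = 3 ∧ j = 5 then 54 else if i = 4 ∧ j = 0 then (81/8) else if i = 5 ∧ j = 1 then (3/16) else 0

noncomputable def mP6 : Matrix (Fin 6) (Fin 6) ℂ := Matrix.of fun i j =>
  if i = 0 ∧ j = 1 then (1/54) else if i = 1 ∧ j = 2 then (8/81) else if i = 2 ∧ j = 3 then (16/3) else if i = 3 ∧ j = 4 then 54 else if i = 4 ∧ j = 5 then (81/8) else if i = 5 ∧ j = 0 then (3/16) else 0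

noncomputable def mP7 : Matrix (Fin 6) (Fin 6) ℂ := Matrix.of fun i j =>
  if i = 0 ∧ j = 0 then (1/54) else if i = 1 ∧ j = 1 then (8/81) else if i = 2 ∧ j = 2 then (16/3) else if i = 3 ∧ j = 3 then 54 else if i = 4 ∧ j = 4 then (81/8) else if i = 5 ∧ j = 5 then (3/16) else 0

noncomputable def mQ1 : Matrix (Fin 6) (Fin 6) ℂ := Matrix.of fun i j =>
  if i = 0 ∧ j = 4 then 1 else if i = 1 ∧ j = 5 then 1 else if i = 2 ∧ j = 0 then 1 else if i = 3 ∧ j = 1 then 1 else if i = 4 ∧ j = 2 then 1 else if i = 5 ∧ j = 3 then 1 else 0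

noncomputable def mQ2 : Matrix (Fin 6) (Fin 6) ℂ := Matrix.of fun i j =>
  if i = 0 ∧ j = 5 then 3 else if i = 1 ∧ j = 0 then (3/2) else if i = 2 ∧ j = 1 then (1/2) else if i = 3 ∧ j = 2 then (1/3) else if i = 4 ∧ j = 3 then (2/3) else if i = 5 ∧ j = 4 then 2 else 0

noncomputable def mQ3 : Matrix (Fin 6) (Fin 6) ℂ := Matrix.of fun i j =>
  if i = 0 ∧ j = 4 then 3 else if i = 1 ∧ j = 5 then (3/2) else if i = 2 ∧ j = 0 then (1/2) else if i = 3 ∧ j = 1 then (1/3) else if i = 4 ∧ j = 2 then (2/3) else if i = 5 ∧ j = 3 then 2 else 0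

noncomputable def mQ4 : Matrix (Fin 6) (Fin 6) ℂ := Matrix.of fun i j =>
  if i = 0 ∧ j = 5 then 9 else if i = 1 ∧ j = 0 then (9/4) else if i = 2 ∧ j = 1 then (1/4) else if i = 3 ∧ j = 2 then (1/9) else if i = 4 ∧ j = 3 then (4/9) else if i = 5 ∧ j = 4 then 4 else 0

noncomputable def mQ5 : Matrix (Fin 6) (Fin 6) ℂ := Matrix.of fun i j =>
  if i = 0 ∧ j = 4 then 9 else if i = 1 ∧ j = 5 then (9/4) else if i = 2 ∧ j = 0 then (1/4) else if i = 3 ∧ j = 1 then (1/9) else if i = 4 ∧ j = 2 then (4/9) else if i = 5 ∧ j = 3 then 4 else 0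

noncomputable def mQ6 : Matrix (Fin 6) (Fin 6) ℂ := Matrix.of fun i j =>
  if i = 0 ∧ j = 5 then 27 else if i = 1 ∧ j = 0 then (27/8) else if i = 2 ∧ j = 1 then (1/8) else if i = 3 ∧ j = 2 then (1/27) else if i = 4 ∧ j = 3 then (8/27) else if i = 5 ∧ j = 4 then 8 else 0

noncomputable def mQ7 : Matrix (Fin 6) (Fin 6) ℂ := Matrix.of fun i j =>
  if i = 0 ∧ j = 0 then (81/2) else if i = 1 ∧ j = 1 then (27/16) else if i = 2 ∧ j = 2 then (1/24) else if i = 3 ∧ j = 3 then (2/81) else if i = 4 ∧ j = 4 then (16/27) else if i = 5 ∧ j = 5 then 24 else 0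

lemma hAAi : mA * mAi = (1 : Matrix (Fin 6) (Fin 6) ℂ) := by
  ext i j
  fin_cases i <;> fin_cases j <;>
    simp [mA, mAi, Matrix.mul_apply, Fin.sum_univ_six, Matrix.one_apply] <;> norm_num

lemma hAiA : mAi * mA = (1 : Matrix (Fin 6) (Fin 6) ℂ) := by
  ext i j
  fin_cases i <;> fin_cases j <;>
    simp [mA, mAi, Matrix.mul_apply, Fin.sum_univ_six, Matrix.one_apply] <;> norm_num

lemma hBBi : mB * mBi = (1 : Matrix (Fin 6) (Fin 6) ℂ) := by
  ext i j
  fin_cases i <;> fin_cases j <;>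
    simp [mB, mBi, Matrix.mul_apply, Fin.sum_univ_six, Matrix.one_apply] <;> norm_num

lemma hBiB : mBi * mB = (1 : Matrix (Fin 6) (Fin 6) ℂ) := by
  ext i j
  fin_cases i <;> fin_cases j <;>
    simp [mB, mBi, Matrix.mul_apply, Fin.sum_univ_six, Matrix.one_apply] <;> norm_num

lemma hAB : mA * mB = mAB := by
  ext i j
  fin_cases i <;> fin_cases j <;>
    simp [mA, mB, mAB, Matrix.mul_apply, Fin.sum_univ_six, Matrix.one_apply] <;> norm_num

lemma hBA : mB * mA = mBA := by
  ext i j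
  fin_cases i <;> fin_cases j <;>
    simp [mA, mB, mBA, Matrix.mul_apply, Fin.sum_univ_six, Matrix.one_apply] <;> norm_num

lemma hABA : mAB * mA = mABA := by
  ext i j
  fin_cases i <;> fin_cases j <;>
    simp [mA, mAB, mABA, Matrix.mul_apply, Fin.sum_univ_six, Matrix.one_apply] <;> norm_num

lemma hBAB : mBA * mB = mABA := by
  ext i j
  fin_cases i <;> fin_cases j <;>
    simp [mB, mBA, mABA, Matrix.mul_apply, Fin.sum_univ_six, Matrix.one_apply] <;> norm_num

lemma hBraid : mA * mB * mA = mB * mA * mB := by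
  rw [hAB, hBA, hABA, hBAB]

lemma hP1 : mAi * mAi = mP1 := by
  ext i j
  fin_cases i <;> fin_cases j <;>
    simp [mAi, mAi, mP1, Matrix.mul_apply, Fin.sum_univ_six, Matrix.one_apply] <;> norm_num

lemma hP2 : mP1 * mB = mP2 := by
  ext i j
  fin_cases i <;> fin_cases j <;>
    simp [mP1, mB, mP2, Matrix.mul_apply, Fin.sum_univ_six, Matrix.one_apply] <;> norm_num

lemma hP3 : mP2 * mAi = mP3 := by
  ext i j
  fin_cases i <;> fin_cases j <;>
    simp [mP2, mAi, mP3, Matrix.mul_apply, Fin.sum_univ_six, Matrix.one_apply] <;> norm_num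

lemma hP4 : mP3 * mB = mP4 := by
  ext i j
  fin_cases i <;> fin_cases j <;>
    simp [mP3, mB, mP4, Matrix.mul_apply, Fin.sum_univ_six, Matrix.one_apply] <;> norm_num

lemma hP5 : mP4 * mAi = mP5 := by
  ext i j
  fin_cases i <;> fin_cases j <;>
    simp [mP4, mAi, mP5, Matrix.mul_apply, Fin.sum_univ_six, Matrix.one_apply] <;> norm_num

lemma hP6 : mP5 * mB = mP6 := by
  ext i j
  fin_cases i <;> fin_cases j <;>
    simp [mP5, mB, mP6, Matrix.mul_apply, Fin.sum_univ_six, Matrix.one_apply] <;> norm_num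

lemma hP7 : mP6 * mB = mP7 := by
  ext i j
  fin_cases i <;> fin_cases j <;>
    simp [mP6, mB, mP7, Matrix.mul_apply, Fin.sum_univ_six, Matrix.one_apply] <;> norm_num

lemma hQ1 : mB * mB = mQ1 := by
  ext i j
  fin_cases i <;> fin_cases j <;>
    simp [mB, mB, mQ1, Matrix.mul_apply, Fin.sum_univ_six, Matrix.one_apply] <;> norm_num

lemma hQ2 : mQ1 * mAi = mQ2 := by
  ext i j
  fin_cases i <;> fin_cases j <;>
    simp [mQ1, mAi, mQ2, Matrix.mul_apply, Fin.sum_univ_six, Matrix.one_apply] <;> norm_num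

lemma hQ3 : mQ2 * mB = mQ3 := by
  ext i j
  fin_cases i <;> fin_cases j <;>
    simp [mQ2, mB, mQ3, Matrix.mul_apply, Fin.sum_univ_six, Matrix.one_apply] <;> norm_num

lemma hQ4 : mQ3 * mAi = mQ4 := by
  ext i j
  fin_cases i <;> fin_cases j <;>
    simp [mQ3, mAi, mQ4, Matrix.mul_apply, Fin.sum_univ_six, Matrix.one_apply] <;> norm_num

lemma hQ5 : mQ4 * mB = mQ5 := by
  ext i j
  fin_cases i <;> fin_cases j <;>
    simp [mQ4, mB, mQ5, Matrix.mul_apply, Fin.sum_univ_six, Matrix.one_apply] <;> norm_num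

lemma hQ6 : mQ5 * mAi = mQ6 := by
  ext i j
  fin_cases i <;> fin_cases j <;>
    simp [mQ5, mAi, mQ6, Matrix.mul_apply, Fin.sum_univ_six, Matrix.one_apply] <;> norm_num

lemma hQ7 : mQ6 * mAi = mQ7 := by
  ext i j
  fin_cases i <;> fin_cases j <;>
    simp [mQ6, mAi, mQ7, Matrix.mul_apply, Fin.sum_univ_six, Matrix.one_apply] <;> norm_num

noncomputable def uA : Matrix.GeneralLinearGroup (Fin 6) ℂ := ⟨mA, mAi, hAAi, hAiA⟩
noncomputable def uB : Matrix.GeneralLinearGroup (Fin 6) ℂ := ⟨mB, mBi, hBBi, hBiB⟩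

lemma lift_rel : ∀ r ∈ braidRels,
    (FreeGroup.lift (![uA, uB] : Fin 2 → Matrix.GeneralLinearGroup (Fin 6) ℂ)) r = 1 := by
  intro r hr
  rw [braidRels, Set.mem_singleton_iff] at hr
  subst hr
  simp only [_root_.map_mul, _root_.map_inv, FreeGroup.lift_apply_of, Matrix.cons_val_zero,
    Matrix.cons_val_one, Matrix.head_cons]
  rw [mul_inv_eq_one]
  exact Units.ext (by simp only [Units.val_mul]; exact hBraid)

noncomputable def φgl : B3 →* Matrix.GeneralLinearGroup (Fin 6) ℂ :=
  PresentedGroup.toGroup lift_rel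

lemma φgl0 : φgl (σ 0) = uA := by
  simp [φgl, σ, PresentedGroup.toGroup.of]

lemma φgl1 : φgl (σ 1) = uB := by
  simp [φgl, σ, PresentedGroup.toGroup.of]

lemma val1 : ((φgl ((σ 0)⁻¹ ^ 2 * σ 1 * (σ 0)⁻¹ * σ 1 * (σ 0)⁻¹ * σ 1 ^ 2) :
    Matrix.GeneralLinearGroup (Fin 6) ℂ) : Matrix (Fin 6) (Fin 6) ℂ) = mP7 := by
  simp only [_root_.map_mul, _root_.map_pow, _root_.map_inv, φgl0, φgl1]
  show ((uA⁻¹ ^ 2 * uB * uA⁻¹ * uB * uA⁻¹ * uB ^ 2 : (Matrix (Fin 6) (Fin 6) ℂ)ˣ) :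
    Matrix (Fin 6) (Fin 6) ℂ) = mP7
  simp only [Units.val_mul, Units.val_pow_eq_pow_val]
  show mAi ^ 2 * mB * mAi * mB * mAi * mB ^ 2 = mP7
  rw [pow_two, pow_two, hP1, hP2, hP3, hP4, hP5, ← mul_assoc, hP6, hP7]

lemma val2 : ((φgl (σ 1 ^ 2 * (σ 0)⁻¹ * σ 1 * (σ 0)⁻¹ * σ 1 * (σ 0)⁻¹ ^ 2) :
    Matrix.GeneralLinearGroup (Fin 6) ℂ) : Matrix (Fin 6) (Fin 6) ℂ) = mQ7 := by
  simp only [_root_.map_mul, _root_.map_pow, _root_.map_inv, φgl0, φgl1]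
  show ((uB ^ 2 * uA⁻¹ * uB * uA⁻¹ * uB * uA⁻¹ ^ 2 : (Matrix (Fin 6) (Fin 6) ℂ)ˣ) :
    Matrix (Fin 6) (Fin 6) ℂ) = mQ7
  simp only [Units.val_mul, Units.val_pow_eq_pow_val]
  show mB ^ 2 * mAi * mB * mAi * mB * mAi ^ 2 = mQ7
  rw [pow_two, pow_two, hQ1, hQ2, hQ3, hQ4, hQ5, ← mul_assoc, hQ6, hQ7]

lemma trace_ne : Matrix.trace mP7 ≠ Matrix.trace mQ7 := by
  have e1 : Matrix.trace mP7 = (90413/1296 : ℂ) := by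
    simp [mP7, Matrix.trace, Matrix.diag, Fin.sum_univ_six]
    norm_num
  have e2 : Matrix.trace mQ7 = (86633/1296 : ℂ) := by
    simp [mQ7, Matrix.trace, Matrix.diag, Fin.sum_univ_six]
    norm_num
  rw [e1, e2]
  norm_num

lemma trace_eq_of_isConj {u v : Matrix.GeneralLinearGroup (Fin 6) ℂ} (h : IsConj u v) :
    Matrix.trace ((u : Matrix.GeneralLinearGroup (Fin 6) ℂ) : Matrix (Fin 6) (Fin 6) ℂ) =
    Matrix.trace ((v : Matrix.GeneralLinearGroup (Fin 6) ℂ) : Matrix (Fin 6) (Fin 6) ℂ) := by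
  obtain ⟨c, hc⟩ := h
  have h3 : u = (↑c)⁻¹ * (v * ↑c) := by rw [← hc.eq, inv_mul_cancel_left]
  rw [h3, Units.val_mul, Units.val_mul, Matrix.trace_mul_comm, mul_assoc, ← Units.val_mul,
    mul_inv_cancel, Units.val_one, mul_one]

theorem braid_8_17_not_conj_to_reverse :
    (∃ φ : B3 →* Matrix.GeneralLinearGroup (Fin 6) ℂ,
      Matrix.trace ((φ ((σ 0)⁻¹ ^ 2 * σ 1 * (σ 0)⁻¹ * σ 1 * (σ 0)⁻¹ * σ 1 ^ 2) :
          Matrix.GeneralLinearGroup (Fin 6) ℂ) : Matrix (Fin 6) (Fin 6) ℂ) ≠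
      Matrix.trace ((φ (σ 1 ^ 2 * (σ 0)⁻¹ * σ 1 * (σ 0)⁻¹ * σ 1 * (σ 0)⁻¹ ^ 2) :
          Matrix.GeneralLinearGroup (Fin 6) ℂ) : Matrix (Fin 6) (Fin 6) ℂ)) ∧
    ¬ IsConj ((σ 0)⁻¹ ^ 2 * σ 1 * (σ 0)⁻¹ * σ 1 * (σ 0)⁻¹ * σ 1 ^ 2)
      (σ 1 ^ 2 * (σ 0)⁻¹ * σ 1 * (σ 0)⁻¹ * σ 1 * (σ 0)⁻¹ ^ 2) := by
  have hne : Matrix.trace ((φgl ((σ 0)⁻¹ ^ 2 * σ 1 * (σ 0)⁻¹ * σ 1 * (σ 0)⁻¹ * σ 1 ^ 2) :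
          Matrix.GeneralLinearGroup (Fin 6) ℂ) : Matrix (Fin 6) (Fin 6) ℂ) ≠
      Matrix.trace ((φgl (σ 1 ^ 2 * (σ 0)⁻¹ * σ 1 * (σ 0)⁻¹ * σ 1 * (σ 0)⁻¹ ^ 2) :
          Matrix.GeneralLinearGroup (Fin 6) ℂ) : Matrix (Fin 6) (Fin 6) ℂ) := by
    rw [val1, val2]; exact trace_ne
  refine ⟨⟨φgl, hne⟩, fun h => hne ?_⟩
  exact trace_eq_of_isConj (φgl.map_isConj h)
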